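/- Let G be a group with finite symmetric generating set X. If (G,X) has the falsification by fellow traveler property with constant k, then for every i ∈ ℕ there exists a constant C(i) (depending only on k and i) such that (G,X) is almost convex(i) with constant C(i): for every n ∈ ℕ and all g, g' ∈ G with d(1,g) = d(1,g') = n and d(g,g') ≤ i, there is an edge path from g to g' of length at most C(i) all of whose vertices lie in the ball B(n) = {h ∈ G : d(1,h) ≤ n}. -/

import Mathlib

section WordMetricPrelude

variable {G : Type*} [Group G]

/-- `w` is a word over the generating set `X`. -/
def IsWord (X : Finset G) (w : List G) : Prop := ∀ x ∈ w, x ∈ X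

/-- The path traced out by the word `w`, at time `t`: the product of the first
`min t w.length` letters of `w`. -/
def wordPath (w : List G) (t : ℕ) : G := (w.take t).prod

/-- The word metric on `G` with respect to `X`: the minimal length of a word
over `X` representing `g⁻¹ * h`. -/
noncomputable def wordDist (X : Finset G) (g h : G) : ℕ :=
  sInf {n : ℕ | ∃ w : List G, IsWord X w ∧ w.length = n ∧ w.prod = g⁻¹ * h}

/-- A word `w` over `X` is geodesic if its length equals the distance from `1`
to the element it represents. -/
def IsGeodesic (X : Finset G) (w : List G) : Prop :=
  IsWord X w ∧ w.length = wordDist X 1 w.prod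

/-- Words `w` and `u` synchronously `k`-fellow travel. -/
def SyncFellowTravel (X : Finset G) (k : ℕ) (w u : List G) : Prop :=
  ∀ t : ℕ, wordDist X (wordPath w t) (wordPath u t) ≤ k

/-- Words `w` and `u` asynchronously `k`-fellow travel: there is a nondecreasing
unbounded reparameterization `φ` with `d(w(t), u(φ t)) ≤ k` for all `t`. -/
def AsyncFellowTravel (X : Finset G) (k : ℕ) (w u : List G) : Prop :=
  ∃ φ : ℕ → ℕ, Monotone φ ∧ (∀ N : ℕ, ∃ t : ℕ, N ≤ φ t) ∧
    ∀ t : ℕ, wordDist X (wordPath w t) (wordPath u (φ t)) ≤ k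

/-- `(G, X)` has the synchronous falsification by fellow traveler property with
constant `k`. -/
def SyncFFTP (X : Finset G) (k : ℕ) : Prop :=
  ∀ w : List G, IsWord X w → ¬ IsGeodesic X w →
    ∃ u : List G, IsWord X u ∧ u.prod = w.prod ∧ u.length < w.length ∧
      SyncFellowTravel X k u w

/-- `(G, X)` has the asynchronous falsification by fellow traveler property with
constant `k`. -/
def AsyncFFTP (X : Finset G) (k : ℕ) : Prop :=
  ∀ w : List G, IsWord X w → ¬ IsGeodesic X w →
    ∃ u : List G, IsWord X u ∧ u.prod = w.prod ∧ u.length < w.length ∧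
      AsyncFellowTravel X k u w

end WordMetricPrelude

section AuxLemmas

variable {G : Type*} [Group G] {X : Finset G}

lemma isWord_take {w : List G} (hw : IsWord X w) (t : ℕ) : IsWord X (w.take t) :=
  fun x hx => hw x (List.mem_of_mem_take hx)

lemma isWord_append {w u : List G} (hw : IsWord X w) (hu : IsWord X u) :
    IsWord X (w ++ u) := by
  intro x hx
  rcases List.mem_append.1 hx with h | h
  exacts [hw x h, hu x h]

lemma wordDist_le {g h : G} {w : List G} (hw : IsWord X w) (hp : w.prod = g⁻¹ * h) :
    wordDist X g h ≤ w.length := Nat.sInf_le ⟨w, hw, rfl, hp⟩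

lemma wordDist_self (g : G) : wordDist X g g = 0 :=
  Nat.eq_zero_of_le_zero
    (wordDist_le (w := []) (fun x hx => absurd hx List.not_mem_nil) (by simp))

lemma wordPath_zero (w : List G) : wordPath w 0 = 1 := rfl

lemma norm_wordPath_le {w : List G} (hw : IsWord X w) (t : ℕ) :
    wordDist X 1 (wordPath w t) ≤ t := by
  refine le_trans (wordDist_le (isWord_take hw t) (by simp [wordPath])) ?_
  simpa using List.length_take_le t w

lemma wordDist_mul_left (a g h : G) : wordDist X (a * g) (a * h) = wordDist X g h := by
  have : (a * g)⁻¹ * (a * h) = g⁻¹ * h := by group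
  unfold wordDist
  rw [this]

lemma wordPath_succ (w : List G) (t : ℕ) :
    wordPath w (t + 1) = wordPath w t * w.getD t 1 := by
  rcases lt_or_ge t w.length with h | h
  · rw [wordPath, wordPath, List.take_succ, List.getElem?_eq_getElem h,
      List.prod_append, List.getD_eq_getElem w 1 h]
    simp
  · rw [wordPath, wordPath, List.take_of_length_le h,
      List.take_of_length_le (le_trans h (Nat.le_succ t)), List.getD_eq_default w 1 h, mul_one]

lemma step_fwd {w : List G} (hw : IsWord X w) (t : ℕ) :
    wordDist X (wordPath w t) (wordPath w (t + 1)) ≤ 1 := by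
  rw [wordPath_succ]
  rcases lt_or_ge t w.length with h | h
  · refine le_trans (wordDist_le (w := [w.getD t 1]) ?_ (by simp)) (by simp)
    intro x hx
    simp only [List.mem_singleton] at hx
    subst hx
    rw [List.getD_eq_getElem w 1 h]
    exact hw _ (List.getElem_mem h)
  · rw [List.getD_eq_default w 1 h, mul_one]
    simp [wordDist_self]

lemma step_back (hsym : ∀ x ∈ X, x⁻¹ ∈ X) {w : List G} (hw : IsWord X w) (t : ℕ) :
    wordDist X (wordPath w (t + 1)) (wordPath w t) ≤ 1 := by
  rw [wordPath_succ]
  rcases lt_or_ge t w.length with h | h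
  · refine le_trans (wordDist_le (w := [(w.getD t 1)⁻¹]) ?_ (by simp)) (by simp)
    intro x hx
    simp only [List.mem_singleton] at hx
    subst hx
    rw [List.getD_eq_getElem w 1 h]
    exact hsym _ (hw _ (List.getElem_mem h))
  · rw [List.getD_eq_default w 1 h, mul_one]
    simp [wordDist_self]

lemma exists_word (hsym : ∀ x ∈ X, x⁻¹ ∈ X) (hgen : Subgroup.closure (X : Set G) = ⊤)
    (g : G) : ∃ w : List G, IsWord X w ∧ w.prod = g := by
  have hg : g ∈ Subgroup.closure (X : Set G) := by rw [hgen]; trivial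
  induction hg using Subgroup.closure_induction with
  | mem x hx => exact ⟨[x], fun y hy => by simpa using (List.mem_singleton.1 hy ▸ hx), by simp⟩
  | one => exact ⟨[], fun x hx => absurd hx List.not_mem_nil, rfl⟩
  | mul a b _ _ iha ihb =>
    obtain ⟨w1, hw1, h1⟩ := iha
    obtain ⟨w2, hw2, h2⟩ := ihb
    exact ⟨w1 ++ w2, isWord_append hw1 hw2, by rw [List.prod_append, h1, h2]⟩
  | inv a _ iha =>
    obtain ⟨w, hw, h⟩ := iha
    refine ⟨(w.map (·⁻¹)).reverse, ?_, ?_⟩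
    · intro x hx
      simp only [List.mem_reverse, List.mem_map] at hx
      obtain ⟨y, hy, rfl⟩ := hx
      exact hsym y (hw y hy)
    · rw [← List.prod_inv_reverse, h]

lemma exists_min_word (hsym : ∀ x ∈ X, x⁻¹ ∈ X) (hgen : Subgroup.closure (X : Set G) = ⊤)
    (g h : G) : ∃ w : List G, IsWord X w ∧ w.length = wordDist X g h ∧ w.prod = g⁻¹ * h := by
  obtain ⟨w, hw, hp⟩ := exists_word hsym hgen (g⁻¹ * h)
  have hne : {n : ℕ | ∃ w : List G, IsWord X w ∧ w.length = n ∧ w.prod = g⁻¹ * h}.Nonempty :=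
    ⟨w.length, w, hw, rfl, hp⟩
  obtain ⟨u, hu, hl, hup⟩ := Nat.sInf_mem hne
  exact ⟨u, hu, hl, hup⟩

lemma wordDist_triangle (hsym : ∀ x ∈ X, x⁻¹ ∈ X) (hgen : Subgroup.closure (X : Set G) = ⊤)
    (a b c : G) : wordDist X a c ≤ wordDist X a b + wordDist X b c := by
  obtain ⟨w1, hw1, hl1, hp1⟩ := exists_min_word hsym hgen a b
  obtain ⟨w2, hw2, hl2, hp2⟩ := exists_min_word hsym hgen b c
  refine le_trans (wordDist_le (isWord_append hw1 hw2) ?_) (by simp [hl1, hl2])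
  rw [List.prod_append, hp1, hp2]
  group

lemma wordDist_symm_le (hsym : ∀ x ∈ X, x⁻¹ ∈ X) (hgen : Subgroup.closure (X : Set G) = ⊤)
    (g h : G) : wordDist X h g ≤ wordDist X g h := by
  obtain ⟨w, hw, hl, hp⟩ := exists_min_word hsym hgen g h
  refine le_trans (wordDist_le (w := (w.map (·⁻¹)).reverse) ?_ ?_) (by simp [hl])
  · intro x hx
    simp only [List.mem_reverse, List.mem_map] at hx
    obtain ⟨y, hy, rfl⟩ := hx
    exact hsym y (hw y hy)
  · rw [← List.prod_inv_reverse, hp]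
    group

lemma eq_zero_dist {g : G} : wordDist X 1 g ≤ 0 → wordDist X 1 g = 0 := Nat.eq_zero_of_le_zero

/-- Key lemma: repeatedly falsifying yields a geodesic word fellow-traveling
the original word at distance `k * (length difference)`. -/
lemma falsify (hsym : ∀ x ∈ X, x⁻¹ ∈ X) (hgen : Subgroup.closure (X : Set G) = ⊤)
    {k : ℕ} (hF : SyncFFTP X k) :
    ∀ (N : ℕ) (w : List G), w.length ≤ N → IsWord X w →
    ∃ u : List G, IsGeodesic X u ∧ u.prod = w.prod ∧ u.length ≤ w.length ∧
      ∀ t, wordDist X (wordPath u t) (wordPath w t) ≤ k * (w.length - u.length) := by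
  intro N
  induction N with
  | zero =>
    intro w hlen hw
    have hwnil : w = [] := List.length_eq_zero_iff.1 (Nat.le_zero.1 hlen)
    subst hwnil
    refine ⟨[], ⟨hw, ?_⟩, rfl, le_rfl, fun t => by simp [wordDist_self]⟩
    simp [wordDist_self]
  | succ N ih =>
    intro w hlen hw
    by_cases hg : IsGeodesic X w
    · exact ⟨w, hg, rfl, le_rfl, fun t => by simp [wordDist_self]⟩
    · obtain ⟨u', hu'w, hu'p, hu'l, hft⟩ := hF w hw hg
      obtain ⟨u, hugeo, hup, hul, hud⟩ := ih u' (by omega) hu'w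
      refine ⟨u, hugeo, hup.trans hu'p, by omega, fun t => ?_⟩
      have h1 : wordDist X (wordPath u t) (wordPath w t) ≤
          wordDist X (wordPath u t) (wordPath u' t) + wordDist X (wordPath u' t) (wordPath w t) :=
        wordDist_triangle hsym hgen _ _ _
      have h2 := hud t
      have h3 := hft t
      have hulen : u.length ≤ u'.length := hul
      have harith : k * (u'.length - u.length) + k ≤ k * (w.length - u.length) := by
        have : (u'.length - u.length) + 1 ≤ w.length - u.length := by omega
        calc k * (u'.length - u.length) + k = k * ((u'.length - u.length) + 1) := by ring
          _ ≤ k * (w.length - u.length) := Nat.mul_le_mul_left k this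
      omega

/-- Concatenation of two good paths. -/
lemma goodPath_concat {n m1 m2 : ℕ} {p q : ℕ → G} {g h g' : G}
    (hp0 : p 0 = g) (hpm : p m1 = h) (hq0 : q 0 = h) (hqm : q m2 = g')
    (hpstep : ∀ j < m1, wordDist X (p j) (p (j + 1)) ≤ 1)
    (hqstep : ∀ j < m2, wordDist X (q j) (q (j + 1)) ≤ 1)
    (hpn : ∀ j ≤ m1, wordDist X 1 (p j) ≤ n) (hqn : ∀ j ≤ m2, wordDist X 1 (q j) ≤ n) :
    ∃ r : ℕ → G, r 0 = g ∧ r (m1 + m2) = g' ∧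
      (∀ j < m1 + m2, wordDist X (r j) (r (j + 1)) ≤ 1) ∧
      (∀ j ≤ m1 + m2, wordDist X 1 (r j) ≤ n) := by
  refine ⟨fun j => if j ≤ m1 then p j else q (j - m1), by simp [hp0], ?_, ?_, ?_⟩
  · by_cases h2 : m1 + m2 ≤ m1
    · have hm2 : m2 = 0 := by omega
      simp only [if_pos h2]
      have : m1 + m2 = m1 := by omega
      rw [this, hpm, ← hq0, ← hm2, hqm]
    · simp only [if_neg h2]
      have : m1 + m2 - m1 = m2 := by omega
      rw [this, hqm]
  · intro j hj
    by_cases h1 : j + 1 ≤ m1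
    · simp only [if_pos (by omega : j ≤ m1), if_pos h1]
      exact hpstep j (by omega)
    · by_cases h2 : j ≤ m1
      · have hje : j = m1 := by omega
        simp only [if_pos h2, if_neg h1]
        have : j + 1 - m1 = 1 := by omega
        rw [this, hje, hpm, ← hq0]
        exact hqstep 0 (by omega)
      · simp only [if_neg h2, if_neg h1]
        have h3 : j + 1 - m1 = (j - m1) + 1 := by omega
        rw [h3]
        exact hqstep (j - m1) (by omega)
  · intro j hj
    by_cases h2 : j ≤ m1
    · simp only [if_pos h2]
      exact hpn j h2
    · simp only [if_neg h2]
      exact hqn (j - m1) (by omega)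

end AuxLemmas
/-- If `(G,X)` has the falsification by fellow traveler
property with constant `k`, then for every `i` there is a constant `C`
(depending only on `k` and `i`) such that `(G,X)` is almost convex(`i`)
with constant `C`. -/
theorem fftp_implies_almost_convex_all :
    ∀ k i : ℕ, ∃ C : ℕ,
      ∀ (G : Type) [Group G] (X : Finset G),
        (∀ x ∈ X, x⁻¹ ∈ X) → Subgroup.closure (X : Set G) = ⊤ →
        SyncFFTP X k →
        ∀ (n : ℕ) (g g' : G), wordDist X 1 g = n → wordDist X 1 g' = n →
          wordDist X g g' ≤ i →
          ∃ (m : ℕ) (p : ℕ → G), m ≤ C ∧ p 0 = g ∧ p m = g' ∧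
            (∀ j < m, wordDist X (p j) (p (j + 1)) ≤ 1) ∧
            (∀ j ≤ m, wordDist X 1 (p j) ≤ n) := by
  intro k i
  refine ⟨3 * (k * i), ?_⟩
  intro G _ X hsym hgen hF n g g' hg hg' hgg'
  set K := k * i with hK
  -- geodesic word w for g
  obtain ⟨w, hwX, hwl, hwp⟩ := exists_min_word hsym hgen 1 g
  rw [inv_one, one_mul] at hwp
  rw [hg] at hwl
  -- word a from g to g'
  obtain ⟨a, haX, hal, hap⟩ := exists_min_word hsym hgen g g'
  -- W = w ++ a represents g'
  set W := w ++ a with hWdef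
  have hWX : IsWord X W := isWord_append hwX haX
  have hWp : W.prod = g' := by
    rw [hWdef, List.prod_append, hwp, hap]
    group
  have hWlen : W.length = n + a.length := by simp [hWdef, hwl]
  -- falsify to a geodesic u
  obtain ⟨u, ⟨huX, hugeo⟩, hup, hul, hud⟩ := falsify hsym hgen hF W.length W le_rfl hWX
  have hulen : u.length = n := by
    rw [hugeo, hup, hWp, hg']
  -- distance bound between the two paths
  have hhop : ∀ t, wordDist X (wordPath u t) (wordPath W t) ≤ K := by
    intro t
    refine le_trans (hud t) ?_
    have h1 : W.length - u.length ≤ i := by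
      have : a.length ≤ i := by rw [hal]; exact hgg'
      omega
    exact Nat.mul_le_mul_left k h1
  set t0 := n - K with ht0
  set A := n - t0 with hA
  have hAK : A ≤ K := by omega
  have hAn : A ≤ n := by omega
  -- geodesic word b from W(t0) to u(t0)
  obtain ⟨b, hbX, hbl, hbp⟩ := exists_min_word hsym hgen (wordPath W t0) (wordPath u t0)
  set L := b.length with hLdef
  have hLK : L ≤ K := by
    rw [hbl]
    exact le_trans (wordDist_symm_le hsym hgen _ _) (hhop t0)
  have ht0L : t0 + L ≤ n := by
    rcases le_or_gt K n with hKn | hKn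
    · omega
    · have ht00 : t0 = 0 := by omega
      have : L = 0 := by
        rw [hbl, ht00, wordPath_zero, wordPath_zero, wordDist_self]
      omega
  -- path values along W
  have hWn : wordPath W n = g := by
    rw [wordPath, hWdef, List.take_left' hwl, hwp]
  have hun : wordPath u n = g' := by
    rw [wordPath, List.take_of_length_le (le_of_eq hulen), hup, hWp]
  -- Segment 1: backward along W from g = W(n) to W(t0), length A
  have seg1 : ∃ r : ℕ → G, r 0 = g ∧ r A = wordPath W t0 ∧
      (∀ j < A, wordDist X (r j) (r (j+1)) ≤ 1) ∧ (∀ j ≤ A, wordDist X 1 (r j) ≤ n) := by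
    refine ⟨fun j => wordPath W (n - j), by simpa using hWn,
      by show wordPath W (n - A) = wordPath W t0; rw [show n - A = t0 by omega], ?_, ?_⟩
    · intro j hj
      show wordDist X (wordPath W (n - j)) (wordPath W (n - (j+1))) ≤ 1
      have h1 : n - j = (n - (j+1)) + 1 := by omega
      rw [h1]
      exact step_back hsym hWX (n - (j+1))
    · intro j hj
      exact le_trans (norm_wordPath_le hWX _) (by omega)
  -- Segment 2: across via b, from W(t0) to u(t0), length L
  have seg2 : ∃ r : ℕ → G, r 0 = wordPath W t0 ∧ r L = wordPath u t0 ∧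
      (∀ j < L, wordDist X (r j) (r (j+1)) ≤ 1) ∧ (∀ j ≤ L, wordDist X 1 (r j) ≤ n) := by
    refine ⟨fun j => wordPath W t0 * wordPath b j, by simp [wordPath_zero], ?_, ?_, ?_⟩
    · show wordPath W t0 * wordPath b L = wordPath u t0
      rw [show wordPath b L = b.prod by rw [wordPath, List.take_of_length_le (le_of_eq hLdef.symm)],
        hbp]
      group
    · intro j hj
      show wordDist X (wordPath W t0 * wordPath b j) (wordPath W t0 * wordPath b (j+1)) ≤ 1
      calc wordDist X (wordPath W t0 * wordPath b j) (wordPath W t0 * wordPath b (j+1))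
          = wordDist X (wordPath b j) (wordPath b (j+1)) := wordDist_mul_left _ _ _
        _ ≤ 1 := step_fwd hbX j
    · intro j hj
      show wordDist X 1 (wordPath W t0 * wordPath b j) ≤ n
      have h1 : wordDist X 1 (wordPath W t0 * wordPath b j) ≤
          wordDist X 1 (wordPath W t0) + wordDist X (wordPath W t0) (wordPath W t0 * wordPath b j) :=
        wordDist_triangle hsym hgen _ _ _
      have h2 : wordDist X (wordPath W t0) (wordPath W t0 * wordPath b j)
          = wordDist X 1 (wordPath b j) := by
        rw [← wordDist_mul_left (wordPath W t0) 1 (wordPath b j), mul_one]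
      have h3 := norm_wordPath_le hWX t0
      have h4 := norm_wordPath_le hbX j
      omega
  -- Segment 3: forward along u from u(t0) to g', length A
  have seg3 : ∃ r : ℕ → G, r 0 = wordPath u t0 ∧ r A = g' ∧
      (∀ j < A, wordDist X (r j) (r (j+1)) ≤ 1) ∧ (∀ j ≤ A, wordDist X 1 (r j) ≤ n) := by
    refine ⟨fun j => wordPath u (t0 + j), by simp [wordPath_zero],
      by show wordPath u (t0 + A) = g'; rw [show t0 + A = n by omega, hun], ?_, ?_⟩
    · intro j hj
      show wordDist X (wordPath u (t0 + j)) (wordPath u (t0 + (j+1))) ≤ 1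
      rw [show t0 + (j+1) = (t0 + j) + 1 by omega]
      exact step_fwd huX (t0 + j)
    · intro j hj
      exact le_trans (norm_wordPath_le huX _) (by omega)
  obtain ⟨r1, h10, h1m, h1s, h1n⟩ := seg1
  obtain ⟨r2, h20, h2m, h2s, h2n⟩ := seg2
  obtain ⟨r3, h30, h3m, h3s, h3n⟩ := seg3
  obtain ⟨r12, h120, h12m, h12s, h12n⟩ :=
    goodPath_concat h10 h1m h20 h2m h1s h2s h1n h2n
  obtain ⟨r, hr0, hrm, hrs, hrn⟩ :=
    goodPath_concat h120 h12m h30 h3m h12s h3s h12n h3n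
  exact ⟨A + L + A, r, by omega, hr0, hrm, hrs, hrn⟩
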